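/- The area generating function of column-convex polyominoes is C(q) = q(1-q)^3 / (1 - 5q + 7q^2 - 4q^3). In particular, if c_n denotes the number of column-convex polyominoes with n cells (up to translation), then Σ_{n≥1} c_n q^n equals this rational function. -/

import Mathlib

/-- The six-letter alphabet {a, b, c, ā, b̄, c̄}, encoded as 0,…,5. -/
abbrev CCLetter := Fin 6

/-- The linear system of languages `L₁,…,L₅` (indexed by `0,…,4`) encoding
column-convex polyominoes cell by cell:
`L₁ = {ε}`, `L₂ = L₁c ∪ L₂a ∪ L₃a ∪ L₄c`, `L₃ = L₂c ∪ L₃b ∪ L₃c`,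
`L₄ = L₂ā ∪ L₃ā ∪ L₄a ∪ L₅b`, `L₅ = L₂c̄ ∪ L₃b̄ ∪ L₃c̄ ∪ L₅b`.
Here a=0, b=1, c=2, ā=3, b̄=4, c̄=5. -/
inductive CCLang : Fin 5 → List CCLetter → Prop
  | eps : CCLang 0 []
  | l2a (w) : CCLang 0 w → CCLang 1 (w ++ [2])
  | l2b (w) : CCLang 1 w → CCLang 1 (w ++ [0])
  | l2c (w) : CCLang 2 w → CCLang 1 (w ++ [0])
  | l2d (w) : CCLang 3 w → CCLang 1 (w ++ [2])
  | l3a (w) : CCLang 1 w → CCLang 2 (w ++ [2])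
  | l3b (w) : CCLang 2 w → CCLang 2 (w ++ [1])
  | l3c (w) : CCLang 2 w → CCLang 2 (w ++ [2])
  | l4a (w) : CCLang 1 w → CCLang 3 (w ++ [3])
  | l4b (w) : CCLang 2 w → CCLang 3 (w ++ [3])
  | l4c (w) : CCLang 3 w → CCLang 3 (w ++ [0])
  | l4d (w) : CCLang 4 w → CCLang 3 (w ++ [1])
  | l5a (w) : CCLang 1 w → CCLang 4 (w ++ [5])
  | l5b (w) : CCLang 2 w → CCLang 4 (w ++ [4])
  | l5c (w) : CCLang 2 w → CCLang 4 (w ++ [5])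
  | l5d (w) : CCLang 4 w → CCLang 4 (w ++ [1])

/-- Column-convex polyominoes of area `n` are in bijection with the words of
length `n` of `L₂ ∪ L₃`; this is their area generating function. -/
noncomputable def ccAreaGF : PowerSeries ℚ :=
  PowerSeries.mk fun n =>
    (Set.ncard {w : List CCLetter | (CCLang 1 w ∨ CCLang 2 w) ∧ w.length = n} : ℚ)

def ccStep1 (j : Fin 5) (l : Fin 6) : Finset (Fin 5) :=
  match j.val, l.val with
  | 0, 2 => {1}
  | 1, 0 => {1} | 1, 2 => {2} | 1, 3 => {3} | 1, 5 => {4}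
  | 2, 0 => {1} | 2, 1 => {2} | 2, 2 => {2} | 2, 3 => {3} | 2, 4 => {4} | 2, 5 => {4}
  | 3, 2 => {1} | 3, 0 => {3}
  | 4, 1 => {3, 4}
  | _, _ => ∅

def ccStepSet (S : Finset (Fin 5)) (l : Fin 6) : Finset (Fin 5) :=
  S.biUnion (fun j => ccStep1 j l)

def ccReach (w : List CCLetter) : Finset (Fin 5) := w.foldl ccStepSet {0}

lemma ccReach_append (w : List CCLetter) (l : CCLetter) :
    ccReach (w ++ [l]) = ccStepSet (ccReach w) l := by
  simp [ccReach, List.foldl_append]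

lemma key_step : ∀ (i j : Fin 5) (l : Fin 6), i ∈ ccStep1 j l →
    ∀ w, CCLang j w → CCLang i (w ++ [l]) := by
  intro i j l h w hw
  fin_cases j <;> fin_cases l <;> fin_cases i <;>
    first
      | exact absurd h (by decide)
      | exact CCLang.l2a _ hw
      | exact CCLang.l2b _ hw
      | exact CCLang.l2c _ hw
      | exact CCLang.l2d _ hw
      | exact CCLang.l3a _ hw
      | exact CCLang.l3b _ hw
      | exact CCLang.l3c _ hw
      | exact CCLang.l4a _ hw
      | exact CCLang.l4b _ hw
      | exact CCLang.l4c _ hw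
      | exact CCLang.l4d _ hw
      | exact CCLang.l5a _ hw
      | exact CCLang.l5b _ hw
      | exact CCLang.l5c _ hw
      | exact CCLang.l5d _ hw

lemma ccLang_iff (i : Fin 5) (w : List CCLetter) : CCLang i w ↔ i ∈ ccReach w := by
  constructor
  · intro h
    induction h
    case eps => decide
    all_goals
      rw [ccReach_append]
      exact Finset.mem_biUnion.2 ⟨_, by assumption, by decide⟩
  · intro h
    induction w using List.reverseRecOn generalizing i with
    | nil =>
      have : i = 0 := by simpa [ccReach] using h
      subst this; exact CCLang.eps
    | append_singleton w l ih =>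
      rw [ccReach_append] at h
      obtain ⟨j, hj, hij⟩ := Finset.mem_biUnion.1 h
      exact key_step i j l hij w (ih j hj)

def ccCnt (p : Finset (Fin 5) → Bool) (n : ℕ) : ℕ :=
  (Finset.univ.filter (fun f : Fin n → CCLetter => p (ccReach (List.ofFn f)) = true)).card

lemma ccCnt_eq_card (p : Finset (Fin 5) → Bool) (n : ℕ) :
    ccCnt p n = Fintype.card {f : Fin n → CCLetter // p (ccReach (List.ofFn f)) = true} :=
  (Fintype.card_subtype _).symm

lemma ncard_bridge (p : Finset (Fin 5) → Bool) (n : ℕ) :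
    Set.ncard {w : List CCLetter | p (ccReach w) = true ∧ w.length = n} = ccCnt p n := by
  have himg : {w : List CCLetter | p (ccReach w) = true ∧ w.length = n}
      = List.ofFn '' {f : Fin n → CCLetter | p (ccReach (List.ofFn f)) = true} := by
    ext w
    simp only [Set.mem_setOf_eq, Set.mem_image]
    constructor
    · rintro ⟨hp, rfl⟩
      exact ⟨w.get, by simpa [List.ofFn_get] using hp, List.ofFn_get w⟩
    · rintro ⟨f, hf, rfl⟩
      exact ⟨hf, by simp⟩
  rw [himg, Set.ncard_image_of_injective _ List.ofFn_injective, ccCnt,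
    ← Set.ncard_coe_finset]
  congr 1
  ext f
  simp

set_option maxHeartbeats 2000000 in
lemma ccCnt_succ (p : Finset (Fin 5) → Bool) (n : ℕ) :
    ccCnt p (n + 1) = ∑ l : CCLetter, ccCnt (fun S => p (ccStepSet S l)) n := by
  have hofn : ∀ (l : CCLetter) (f : Fin n → CCLetter),
      List.ofFn (Fin.snoc f l : Fin (n+1) → CCLetter) = List.ofFn f ++ [l] := by
    intro l f
    rw [List.ofFn_succ']
    simp [List.concat_eq_append]
  rw [ccCnt_eq_card]
  have e1 : {g : Fin (n+1) → CCLetter // p (ccReach (List.ofFn g)) = true}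
      ≃ Σ l : CCLetter, {f : Fin n → CCLetter //
          p (ccStepSet (ccReach (List.ofFn f)) l) = true} := by
    refine Equiv.trans ?_ (Equiv.subtypeProdEquivSigmaSubtype
      (fun (l : CCLetter) (f : Fin n → CCLetter) =>
        p (ccStepSet (ccReach (List.ofFn f)) l) = true))
    refine ((Fin.snocEquiv (fun _ => CCLetter)).subtypeEquiv ?_).symm
    intro x
    have : (Fin.snocEquiv (fun _ => CCLetter)) x = Fin.snoc x.2 x.1 := rfl
    rw [this, hofn, ccReach_append]
  rw [Fintype.card_congr e1, Fintype.card_sigma]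
  exact Finset.sum_congr rfl fun l _ => (ccCnt_eq_card (fun S => p (ccStepSet S l)) n).symm

def ccRS1 : Finset (Finset (Fin 5)) := {∅, {1}, {2}, {3}, {3, 4}, {4}}

lemma ccReach_mem_RS1 (w : List CCLetter) (hw : w ≠ []) : ccReach w ∈ ccRS1 := by
  induction w using List.reverseRecOn with
  | nil => exact absurd rfl hw
  | append_singleton w l ih =>
    rw [ccReach_append]
    rcases eq_or_ne w [] with rfl | hne
    · revert l; decide
    · have h1 := ih hne
      have hcl : ∀ S ∈ ccRS1, ∀ l : Fin 6, ccStepSet S l ∈ ccRS1 := by decide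
      exact hcl _ h1 l

lemma ccCnt_congr (p q : Finset (Fin 5) → Bool) (n : ℕ)
    (h : ∀ S ∈ ccRS1, p S = q S) :
    ccCnt p (n + 1) = ccCnt q (n + 1) := by
  unfold ccCnt
  congr 1
  apply Finset.filter_congr
  intro f _
  have hm : ccReach (List.ofFn f) ∈ ccRS1 := by
    apply ccReach_mem_RS1
    intro hnil
    have := congrArg List.length hnil
    simp at this
  rw [h _ hm]

lemma ccCnt_or (p q : Finset (Fin 5) → Bool) (n : ℕ)
    (h : ∀ S : Finset (Fin 5), ¬(p S = true ∧ q S = true)) :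
    ccCnt (fun S => p S || q S) n = ccCnt p n + ccCnt q n := by
  unfold ccCnt
  simp only [Bool.or_eq_true]
  rw [Finset.filter_or, Finset.card_union_of_disjoint]
  exact Finset.disjoint_filter.2 fun f _ hp hq => h _ ⟨hp, hq⟩

lemma ccCnt_false (n : ℕ) : ccCnt (fun _ => false) n = 0 := by
  simp [ccCnt]

lemma ccCnt_zero (p : Finset (Fin 5) → Bool) :
    ccCnt p 0 = if p {0} = true then 1 else 0 := by
  rw [ccCnt, Finset.univ_unique, Finset.filter_singleton]
  have h0 : ∀ f : Fin 0 → CCLetter, p (ccReach (List.ofFn f)) = p {0} := fun f => rfl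
  simp only [h0]
  split_ifs <;> simp

def ccA (S : Finset (Fin 5)) (n : ℕ) : ℕ := ccCnt (fun T => decide (T = S)) n

def ccGoodB (S : Finset (Fin 5)) : Bool := decide ((1 : Fin 5) ∈ S ∨ (2 : Fin 5) ∈ S)

lemma ccCnt_step_zero (l : Fin 6) (S : Finset (Fin 5)) (n : ℕ)
    (h : ∀ T ∈ ccRS1, (decide (ccStepSet T l = S) : Bool) = false) :
    ccCnt (fun T => decide (ccStepSet T l = S)) (n + 1) = 0 := by
  rw [ccCnt_congr _ (fun _ => false) n h, ccCnt_false]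

lemma ccCnt_step_one (l : Fin 6) (S T1 : Finset (Fin 5)) (n : ℕ)
    (h : ∀ T ∈ ccRS1, (decide (ccStepSet T l = S) : Bool) = decide (T = T1)) :
    ccCnt (fun T => decide (ccStepSet T l = S)) (n + 1) = ccA T1 (n + 1) :=
  ccCnt_congr _ _ n h

lemma ccCnt_step_two (l : Fin 6) (S T1 T2 : Finset (Fin 5)) (n : ℕ)
    (h : ∀ T ∈ ccRS1,
      (decide (ccStepSet T l = S) : Bool) = (decide (T = T1) || decide (T = T2)))
    (hd : ∀ U : Finset (Fin 5), ¬((decide (U = T1) : Bool) = true ∧ (decide (U = T2) : Bool) = true)) :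
    ccCnt (fun T => decide (ccStepSet T l = S)) (n + 1) = ccA T1 (n + 1) + ccA T2 (n + 1) := by
  rw [ccCnt_congr _ _ n h, ccCnt_or _ _ _ hd]; rfl

lemma ccC_eq (n : ℕ) :
    ccCnt ccGoodB (n + 1) = ccA {1} (n + 1) + ccA {2} (n + 1) := by
  rw [ccCnt_congr ccGoodB (fun T => decide (T = ({1} : Finset (Fin 5))) ||
    decide (T = ({2} : Finset (Fin 5)))) n (by decide), ccCnt_or _ _ _ (by decide)]
  rfl

lemma stepA (n : ℕ) : ccA {1} (n + 2) =
    (ccA {1} (n + 1) + ccA {2} (n + 1)) + (ccA {3} (n + 1) + ccA {3, 4} (n + 1)) := by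
  have h := ccCnt_succ (fun T => decide (T = ({1} : Finset (Fin 5)))) (n + 1)
  simp only [Fin.sum_univ_six] at h
  rw [ccA, h,
    ccCnt_step_two 0 {1} {1} {2} n (by decide) (by decide),
    ccCnt_step_zero 1 {1} n (by decide),
    ccCnt_step_two 2 {1} {3} {3, 4} n (by decide) (by decide),
    ccCnt_step_zero 3 {1} n (by decide),
    ccCnt_step_zero 4 {1} n (by decide),
    ccCnt_step_zero 5 {1} n (by decide)]
  omega

lemma stepB (n : ℕ) : ccA {2} (n + 2) =
    ccA {2} (n + 1) + (ccA {1} (n + 1) + ccA {2} (n + 1)) := by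
  have h := ccCnt_succ (fun T => decide (T = ({2} : Finset (Fin 5)))) (n + 1)
  simp only [Fin.sum_univ_six] at h
  rw [ccA, h,
    ccCnt_step_zero 0 {2} n (by decide),
    ccCnt_step_one 1 {2} {2} n (by decide),
    ccCnt_step_two 2 {2} {1} {2} n (by decide) (by decide),
    ccCnt_step_zero 3 {2} n (by decide),
    ccCnt_step_zero 4 {2} n (by decide),
    ccCnt_step_zero 5 {2} n (by decide)]
  omega

lemma stepC (n : ℕ) : ccA {3} (n + 2) =
    (ccA {3} (n + 1) + ccA {3, 4} (n + 1)) + (ccA {1} (n + 1) + ccA {2} (n + 1)) := by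
  have h := ccCnt_succ (fun T => decide (T = ({3} : Finset (Fin 5)))) (n + 1)
  simp only [Fin.sum_univ_six] at h
  rw [ccA, h,
    ccCnt_step_two 0 {3} {3} {3, 4} n (by decide) (by decide),
    ccCnt_step_zero 1 {3} n (by decide),
    ccCnt_step_zero 2 {3} n (by decide),
    ccCnt_step_two 3 {3} {1} {2} n (by decide) (by decide),
    ccCnt_step_zero 4 {3} n (by decide),
    ccCnt_step_zero 5 {3} n (by decide)]
  omega

lemma stepD (n : ℕ) : ccA {3, 4} (n + 2) =
    ccA {3, 4} (n + 1) + ccA {4} (n + 1) := by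
  have h := ccCnt_succ (fun T => decide (T = ({3, 4} : Finset (Fin 5)))) (n + 1)
  simp only [Fin.sum_univ_six] at h
  rw [ccA, h,
    ccCnt_step_zero 0 {3, 4} n (by decide),
    ccCnt_step_two 1 {3, 4} {3, 4} {4} n (by decide) (by decide),
    ccCnt_step_zero 2 {3, 4} n (by decide),
    ccCnt_step_zero 3 {3, 4} n (by decide),
    ccCnt_step_zero 4 {3, 4} n (by decide),
    ccCnt_step_zero 5 {3, 4} n (by decide)]
  omega

lemma stepF (n : ℕ) : ccA {4} (n + 2) =
    ccA {2} (n + 1) + (ccA {1} (n + 1) + ccA {2} (n + 1)) := by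
  have h := ccCnt_succ (fun T => decide (T = ({4} : Finset (Fin 5)))) (n + 1)
  simp only [Fin.sum_univ_six] at h
  rw [ccA, h,
    ccCnt_step_zero 0 {4} n (by decide),
    ccCnt_step_zero 1 {4} n (by decide),
    ccCnt_step_zero 2 {4} n (by decide),
    ccCnt_step_zero 3 {4} n (by decide),
    ccCnt_step_one 4 {4} {2} n (by decide),
    ccCnt_step_two 5 {4} {1} {2} n (by decide) (by decide)]
  omega

lemma ccA_one_1 : ccA {1} 1 = 1 := by
  have h := ccCnt_succ (fun T => decide (T = ({1} : Finset (Fin 5)))) 0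
  simp only [Fin.sum_univ_six, ccCnt_zero, Nat.reduceAdd] at h
  rw [ccA, h]; decide

lemma ccA_one_2 : ccA {2} 1 = 0 := by
  have h := ccCnt_succ (fun T => decide (T = ({2} : Finset (Fin 5)))) 0
  simp only [Fin.sum_univ_six, ccCnt_zero, Nat.reduceAdd] at h
  rw [ccA, h]; decide

lemma ccA_one_3 : ccA {3} 1 = 0 := by
  have h := ccCnt_succ (fun T => decide (T = ({3} : Finset (Fin 5)))) 0
  simp only [Fin.sum_univ_six, ccCnt_zero, Nat.reduceAdd] at h
  rw [ccA, h]; decide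

lemma ccA_one_34 : ccA {3, 4} 1 = 0 := by
  have h := ccCnt_succ (fun T => decide (T = ({3, 4} : Finset (Fin 5)))) 0
  simp only [Fin.sum_univ_six, ccCnt_zero, Nat.reduceAdd] at h
  rw [ccA, h]; decide

lemma ccA_one_4 : ccA {4} 1 = 0 := by
  have h := ccCnt_succ (fun T => decide (T = ({4} : Finset (Fin 5)))) 0
  simp only [Fin.sum_univ_six, ccCnt_zero, Nat.reduceAdd] at h
  rw [ccA, h]; decide

lemma ccC_rec (n : ℕ) :
    ccCnt ccGoodB (n + 5) + 7 * ccCnt ccGoodB (n + 3)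
      = 5 * ccCnt ccGoodB (n + 4) + 4 * ccCnt ccGoodB (n + 2) := by
  have a2 : ccA {1} (n+2) = (ccA {1} (n+1) + ccA {2} (n+1)) + (ccA {3} (n+1) + ccA {3,4} (n+1)) := stepA n
  have a3 : ccA {1} (n+3) = (ccA {1} (n+2) + ccA {2} (n+2)) + (ccA {3} (n+2) + ccA {3,4} (n+2)) := stepA (n+1)
  have a4 : ccA {1} (n+4) = (ccA {1} (n+3) + ccA {2} (n+3)) + (ccA {3} (n+3) + ccA {3,4} (n+3)) := stepA (n+2)
  have a5 : ccA {1} (n+5) = (ccA {1} (n+4) + ccA {2} (n+4)) + (ccA {3} (n+4) + ccA {3,4} (n+4)) := stepA (n+3)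
  have b2 : ccA {2} (n+2) = ccA {2} (n+1) + (ccA {1} (n+1) + ccA {2} (n+1)) := stepB n
  have b3 : ccA {2} (n+3) = ccA {2} (n+2) + (ccA {1} (n+2) + ccA {2} (n+2)) := stepB (n+1)
  have b4 : ccA {2} (n+4) = ccA {2} (n+3) + (ccA {1} (n+3) + ccA {2} (n+3)) := stepB (n+2)
  have b5 : ccA {2} (n+5) = ccA {2} (n+4) + (ccA {1} (n+4) + ccA {2} (n+4)) := stepB (n+3)
  have c2 : ccA {3} (n+2) = (ccA {3} (n+1) + ccA {3,4} (n+1)) + (ccA {1} (n+1) + ccA {2} (n+1)) := stepC n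
  have c3 : ccA {3} (n+3) = (ccA {3} (n+2) + ccA {3,4} (n+2)) + (ccA {1} (n+2) + ccA {2} (n+2)) := stepC (n+1)
  have c4 : ccA {3} (n+4) = (ccA {3} (n+3) + ccA {3,4} (n+3)) + (ccA {1} (n+3) + ccA {2} (n+3)) := stepC (n+2)
  have d2 : ccA {3,4} (n+2) = ccA {3,4} (n+1) + ccA {4} (n+1) := stepD n
  have d3 : ccA {3,4} (n+3) = ccA {3,4} (n+2) + ccA {4} (n+2) := stepD (n+1)
  have d4 : ccA {3,4} (n+4) = ccA {3,4} (n+3) + ccA {4} (n+3) := stepD (n+2)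
  have f2 : ccA {4} (n+2) = ccA {2} (n+1) + (ccA {1} (n+1) + ccA {2} (n+1)) := stepF n
  have f3 : ccA {4} (n+3) = ccA {2} (n+2) + (ccA {1} (n+2) + ccA {2} (n+2)) := stepF (n+1)
  have g2 : ccCnt ccGoodB (n+2) = ccA {1} (n+2) + ccA {2} (n+2) := ccC_eq (n+1)
  have g3 : ccCnt ccGoodB (n+3) = ccA {1} (n+3) + ccA {2} (n+3) := ccC_eq (n+2)
  have g4 : ccCnt ccGoodB (n+4) = ccA {1} (n+4) + ccA {2} (n+4) := ccC_eq (n+3)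
  have g5 : ccCnt ccGoodB (n+5) = ccA {1} (n+5) + ccA {2} (n+5) := ccC_eq (n+4)
  omega

lemma ccC0 : ccCnt ccGoodB 0 = 0 := by rw [ccCnt_zero]; decide

lemma ccC1 : ccCnt ccGoodB 1 = 1 := by
  have g : ccCnt ccGoodB 1 = ccA {1} 1 + ccA {2} 1 := ccC_eq 0
  rw [g, ccA_one_1, ccA_one_2]

lemma A21 : ccA {1} 2 = 1 := by
  have h := stepA 0; simp only [Nat.reduceAdd] at h
  rw [h, ccA_one_1, ccA_one_2, ccA_one_3, ccA_one_34]
lemma A22 : ccA {2} 2 = 1 := by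
  have h := stepB 0; simp only [Nat.reduceAdd] at h
  rw [h, ccA_one_1, ccA_one_2]
lemma A23 : ccA {3} 2 = 1 := by
  have h := stepC 0; simp only [Nat.reduceAdd] at h
  rw [h, ccA_one_1, ccA_one_2, ccA_one_3, ccA_one_34]
lemma A234 : ccA {3, 4} 2 = 0 := by
  have h := stepD 0; simp only [Nat.reduceAdd] at h
  rw [h, ccA_one_34, ccA_one_4]
lemma A24 : ccA {4} 2 = 1 := by
  have h := stepF 0; simp only [Nat.reduceAdd] at h
  rw [h, ccA_one_1, ccA_one_2]
lemma A31 : ccA {1} 3 = 3 := by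
  have h := stepA 1; simp only [Nat.reduceAdd] at h
  rw [h, A21, A22, A23, A234]
lemma A32 : ccA {2} 3 = 3 := by
  have h := stepB 1; simp only [Nat.reduceAdd] at h
  rw [h, A21, A22]
lemma A33 : ccA {3} 3 = 3 := by
  have h := stepC 1; simp only [Nat.reduceAdd] at h
  rw [h, A21, A22, A23, A234]
lemma A334 : ccA {3, 4} 3 = 1 := by
  have h := stepD 1; simp only [Nat.reduceAdd] at h
  rw [h, A234, A24]
lemma A41 : ccA {1} 4 = 10 := by
  have h := stepA 2; simp only [Nat.reduceAdd] at h
  rw [h, A31, A32, A33, A334]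
lemma A42 : ccA {2} 4 = 9 := by
  have h := stepB 2; simp only [Nat.reduceAdd] at h
  rw [h, A31, A32]
lemma ccC2 : ccCnt ccGoodB 2 = 2 := by
  have h := ccC_eq 1; simp only [Nat.reduceAdd] at h
  rw [h, A21, A22]
lemma ccC3 : ccCnt ccGoodB 3 = 6 := by
  have h := ccC_eq 2; simp only [Nat.reduceAdd] at h
  rw [h, A31, A32]
lemma ccC4 : ccCnt ccGoodB 4 = 19 := by
  have h := ccC_eq 3; simp only [Nat.reduceAdd] at h
  rw [h, A41, A42]

lemma coeff_ccAreaGF (n : ℕ) :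
    (PowerSeries.coeff (R := ℚ) n) ccAreaGF = (ccCnt ccGoodB n : ℚ) := by
  rw [ccAreaGF, PowerSeries.coeff_mk]
  have hset : {w : List CCLetter | (CCLang 1 w ∨ CCLang 2 w) ∧ w.length = n}
      = {w : List CCLetter | ccGoodB (ccReach w) = true ∧ w.length = n} := by
    ext w
    simp only [Set.mem_setOf_eq, ccGoodB, decide_eq_true_eq, ccLang_iff]
  rw [hset, ncard_bridge]

open PowerSeries in
theorem ccAreaGF_eq :
    (1 - 5 * X + 7 * X ^ 2 - 4 * X ^ 3 : PowerSeries ℚ) * ccAreaGF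
      = X * (1 - X) ^ 3 := by
  have h5 : (5 : PowerSeries ℚ) = (PowerSeries.C (R := ℚ)) 5 := (map_ofNat ((PowerSeries.C (R := ℚ))) 5).symm
  have h7 : (7 : PowerSeries ℚ) = (PowerSeries.C (R := ℚ)) 7 := (map_ofNat ((PowerSeries.C (R := ℚ))) 7).symm
  have h4 : (4 : PowerSeries ℚ) = (PowerSeries.C (R := ℚ)) 4 := (map_ofNat ((PowerSeries.C (R := ℚ))) 4).symm
  have h3 : (PowerSeries.C (R := ℚ)) 3 = (3 : PowerSeries ℚ) := map_ofNat ((PowerSeries.C (R := ℚ))) 3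
  have hL : (1 - 5 * X + 7 * X ^ 2 - 4 * X ^ 3 : PowerSeries ℚ) * ccAreaGF
      = ccAreaGF - (PowerSeries.C (R := ℚ)) 5 * (X ^ 1 * ccAreaGF)
        + (PowerSeries.C (R := ℚ)) 7 * (X ^ 2 * ccAreaGF)
        - (PowerSeries.C (R := ℚ)) 4 * (X ^ 3 * ccAreaGF) := by
    rw [← h5, ← h7, ← h4]; ring
  have hR : (X * (1 - X) ^ 3 : PowerSeries ℚ)
      = X ^ 1 - (PowerSeries.C (R := ℚ)) 3 * X ^ 2 + (PowerSeries.C (R := ℚ)) 3 * X ^ 3 - X ^ 4 := by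
    rw [h3]; ring
  rw [hL, hR]
  ext n
  simp only [map_sub, map_add, PowerSeries.coeff_C_mul, PowerSeries.coeff_X_pow_mul',
    coeff_ccAreaGF, PowerSeries.coeff_X_pow]
  rcases n with _ | _ | _ | _ | _ | m
  · norm_num [ccC0]
  · norm_num [ccC0, ccC1]
  · norm_num [ccC2, ccC1, ccC0]
  · norm_num [ccC3, ccC2, ccC1, ccC0]
  · norm_num [ccC4, ccC3, ccC2, ccC1]
  · rw [if_pos (show (1:ℕ) ≤ m + 5 by omega), if_pos (show (2:ℕ) ≤ m + 5 by omega),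
      if_pos (show (3:ℕ) ≤ m + 5 by omega),
      if_neg (show ¬(m + 5 = 1) by omega), if_neg (show ¬(m + 5 = 2) by omega),
      if_neg (show ¬(m + 5 = 3) by omega), if_neg (show ¬(m + 5 = 4) by omega)]
    simp only [show m + 5 - 1 = m + 4 from rfl, show m + 5 - 2 = m + 3 from rfl,
      show m + 5 - 3 = m + 2 from rfl]
    have hrec := ccC_rec m
    have hq := congrArg (fun k : ℕ => (k : ℚ)) hrec
    push_cast at hq
    linarith
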